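/- Let X be a complete separable metric space. For every N' < 0, ε > 0 and E ∈ (0,∞) there exists δ > 0 with the following property: whenever μ, ν are Borel probability measures on X with S_{N',μ}(ν) ≤ E and X̃ ⊆ X is a Borel set with μ(X \ X̃) < δ, then ν(X \ X̃) < ε. In particular, if μ_n, ν_n are sequences of Borel probability measures on X such that {μ_n} is tight and sup_{n} S_{N',μ_n}(ν_n) < ∞, then {ν_n} is tight. -/
import Mathlib


/-- A bundled mm-space: a complete separable metric space with a Borel probability measure. -/
structure MMSpace where
  X : Type
  [metric : MetricSpace X]
  [cpl : CompleteSpace X]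
  [sep : TopologicalSpace.SeparableSpace X]
  [mble : MeasurableSpace X]
  [borel : BorelSpace X]
  μ : MeasureTheory.Measure X
  [prob : MeasureTheory.IsProbabilityMeasure μ]

attribute [instance] MMSpace.metric MMSpace.cpl MMSpace.sep MMSpace.mble MMSpace.borel MMSpace.prob

open MeasureTheory ENNReal Filter Topology Set

noncomputable section

/-- A coupling of two measures on `X` is a measure on `X × X` whose marginals are the
given measures. -/
def IsCoupling {X : Type*} [MeasurableSpace X] (π : Measure (X × X)) (μ ν : Measure X) : Prop :=
  π.map Prod.fst = μ ∧ π.map Prod.snd = ν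

/-- A measure has finite second moment if `∫ d(x,x₀)² dμ < ∞` for some base point. -/
def HasFiniteSecondMoment {X : Type*} [PseudoMetricSpace X] [MeasurableSpace X]
    (μ : Measure X) : Prop :=
  ∃ x₀ : X, ∫⁻ x, ENNReal.ofReal (dist x x₀) ^ 2 ∂μ < ∞

/-- The square-root of the quadratic transport cost of a coupling. -/
def cost2 {X : Type*} [PseudoMetricSpace X] [MeasurableSpace X] (π : Measure (X × X)) : ℝ≥0∞ :=
  (∫⁻ p, ENNReal.ofReal (dist p.1 p.2) ^ 2 ∂π) ^ (1 / 2 : ℝ)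

/-- The 2-Wasserstein distance (valued in `[0,∞]`). -/
def W2 {X : Type*} [PseudoMetricSpace X] [MeasurableSpace X] (μ ν : Measure X) : ℝ≥0∞ :=
  ⨅ (π : Measure (X × X)) (_ : IsCoupling π μ ν), cost2 π

/-- A coupling is optimal if it attains the 2-Wasserstein distance. -/
def IsOptimalCoupling {X : Type*} [PseudoMetricSpace X] [MeasurableSpace X]
    (π : Measure (X × X)) (μ ν : Measure X) : Prop :=
  IsCoupling π μ ν ∧ cost2 π = W2 μ ν

open Classical in
/-- The Rényi entropy `S_{N',μ}(ν) = ∫ ρ^{1-1/N'} dμ` if `ν = ρμ ≪ μ`, and `∞` otherwise. -/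
def renyiEntropy {X : Type*} [MeasurableSpace X] (N' : ℝ) (μ ν : Measure X) : ℝ≥0∞ :=
  if ν ≪ μ then ∫⁻ x, (ν.rnDeriv μ x) ^ (1 - 1 / N') ∂μ else ∞

/-- Weak convergence of a sequence of measures: convergence of integrals of all bounded
continuous functions. -/
def WeakConv {X : Type*} [TopologicalSpace X] [MeasurableSpace X]
    (μs : ℕ → Measure X) (μ : Measure X) : Prop :=
  ∀ f : BoundedContinuousFunction X ℝ,
    Tendsto (fun n => ∫ x, f x ∂(μs n)) atTop (𝓝 (∫ x, f x ∂μ))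

/-- Tightness of a sequence of measures. -/
def IsTightSeq {X : Type*} [TopologicalSpace X] [MeasurableSpace X]
    (μs : ℕ → Measure X) : Prop :=
  ∀ ε : ℝ, 0 < ε → ∃ K : Set X, IsCompact K ∧ ∀ n, μs n Kᶜ < ENNReal.ofReal ε

/-- The function `s_κ`, with the convention `s_κ(0) = 1`. -/
def sKappa (κ θ : ℝ) : ℝ :=
  if θ = 0 then 1
  else if 0 < κ then Real.sin (Real.sqrt κ * θ) / (Real.sqrt κ * θ)
  else if κ < 0 then Real.sinh (Real.sqrt (-κ) * θ) / (Real.sqrt (-κ) * θ)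
  else 1

/-- `ω_κ = π/√κ` for `κ > 0` and `∞` otherwise. -/
def omegaKappa (κ : ℝ) : ℝ≥0∞ :=
  if 0 < κ then ENNReal.ofReal (Real.pi / Real.sqrt κ) else ∞

/-- The coefficient `τ_{K,N}^{(t)}(θ)`, valued in `[0,∞]`. -/
def tauCoeff (K N t θ : ℝ) : ℝ≥0∞ :=
  if ENNReal.ofReal θ < omegaKappa (K / (N - 1)) then
    ENNReal.ofReal (t * (sKappa (K / (N - 1)) (t * θ) / sKappa (K / (N - 1)) θ) ^ (1 - 1 / N))
  else ∞

/-- The coefficient `σ_κ^{(t)}(θ)`, valued in `[0,∞]`. -/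
def sigmaCoeff (κ t θ : ℝ) : ℝ≥0∞ :=
  if ENNReal.ofReal θ < omegaKappa κ then
    ENNReal.ofReal (t * sKappa κ (t * θ) / sKappa κ θ)
  else ∞

/-- The curvature-dimension condition `CD(K,N)` for `N < 0`, for a (probability) measure on a
metric space. -/
def IsCDSpace {X : Type*} [MetricSpace X] [MeasurableSpace X] (K N : ℝ) (μX : Measure X) : Prop :=
  ∀ ν₀ ν₁ : Measure X, IsProbabilityMeasure ν₀ → IsProbabilityMeasure ν₁ →
    ν₀ ≪ μX → ν₁ ≪ μX →
    HasFiniteSecondMoment ν₀ → HasFiniteSecondMoment ν₁ →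
    renyiEntropy N μX ν₀ < ∞ → renyiEntropy N μX ν₁ < ∞ →
    ∃ (νt : ℝ → Measure X) (π : Measure (X × X)),
      νt 0 = ν₀ ∧ νt 1 = ν₁ ∧
      (∀ s ∈ Icc (0:ℝ) 1, ∀ t ∈ Icc (0:ℝ) 1,
        W2 (νt s) (νt t) = ENNReal.ofReal |s - t| * W2 ν₀ ν₁) ∧
      IsOptimalCoupling π ν₀ ν₁ ∧
      (∀ t ∈ Icc (0:ℝ) 1, ∀ N' ∈ Ico N (0:ℝ),
        renyiEntropy N' μX ν₀ < ∞ → renyiEntropy N' μX ν₁ < ∞ →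
        renyiEntropy N' μX (νt t) ≤
          (∫⁻ p, tauCoeff K N' (1 - t) (dist p.1 p.2) * (ν₀.rnDeriv μX p.1) ^ (-(1 / N')) ∂π)
          + ∫⁻ p, tauCoeff K N' t (dist p.1 p.2) * (ν₁.rnDeriv μX p.2) ^ (-(1 / N')) ∂π)

/-- The reduced curvature-dimension condition `CD*(K,N)` for `N < 0`. -/
def IsCDStarSpace {X : Type*} [MetricSpace X] [MeasurableSpace X] (K N : ℝ)
    (μX : Measure X) : Prop :=
  ∀ ν₀ ν₁ : Measure X, IsProbabilityMeasure ν₀ → IsProbabilityMeasure ν₁ →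
    ν₀ ≪ μX → ν₁ ≪ μX →
    HasFiniteSecondMoment ν₀ → HasFiniteSecondMoment ν₁ →
    renyiEntropy N μX ν₀ < ∞ → renyiEntropy N μX ν₁ < ∞ →
    ∃ (νt : ℝ → Measure X) (π : Measure (X × X)),
      νt 0 = ν₀ ∧ νt 1 = ν₁ ∧
      (∀ s ∈ Icc (0:ℝ) 1, ∀ t ∈ Icc (0:ℝ) 1,
        W2 (νt s) (νt t) = ENNReal.ofReal |s - t| * W2 ν₀ ν₁) ∧
      IsOptimalCoupling π ν₀ ν₁ ∧
      (∀ t ∈ Icc (0:ℝ) 1, ∀ N' ∈ Ico N (0:ℝ),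
        renyiEntropy N' μX ν₀ < ∞ → renyiEntropy N' μX ν₁ < ∞ →
        renyiEntropy N' μX (νt t) ≤
          (∫⁻ p, sigmaCoeff (K / N') (1 - t) (dist p.1 p.2)
              * (ν₀.rnDeriv μX p.1) ^ (-(1 / N')) ∂π)
          + ∫⁻ p, sigmaCoeff (K / N') t (dist p.1 p.2)
              * (ν₁.rnDeriv μX p.2) ^ (-(1 / N')) ∂π)

/-- The conditioned (normalized restricted) measure `ν_B`. -/
def condProb {X : Type*} [MeasurableSpace X] (ν : Measure X) (B : Set X) : Measure X :=
  (ν B)⁻¹ • ν.restrict B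

/-- Inverse hyperbolic cosine, `arcosh x = log (x + √(x²-1))`. -/
def acosh (x : ℝ) : ℝ := Real.log (x + Real.sqrt (x ^ 2 - 1))

/-- A parameter of an mm-space: a Borel map `[0,1) → X` pushing the Lebesgue measure to `μ`. -/
def IsParameter (A : MMSpace) (φ : ℝ → A.X) : Prop :=
  Measurable φ ∧ Measure.map φ (volume.restrict (Ico (0:ℝ) 1)) = A.μ

/-- The Ky Fan distance between two measurable functions on `[0,1)`. -/
def kyFan (f g : ℝ → ℝ) : ℝ :=
  sInf {ε : ℝ | 0 ≤ ε ∧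
    (volume.restrict (Ico (0:ℝ) 1)) {x | ε < |f x - g x|} ≤ ENNReal.ofReal ε}

/-- The pullback of the 1-Lipschitz functions on an mm-space by a parameter. -/
def pullLip (A : MMSpace) (φ : ℝ → A.X) : Set (ℝ → ℝ) :=
  {h | ∃ f : A.X → ℝ, LipschitzWith 1 f ∧ h = f ∘ φ}

/-- The Hausdorff distance between two sets of functions with respect to the Ky Fan metric. -/
def hausdorffKF (A B : Set (ℝ → ℝ)) : ℝ :=
  max (⨆ f ∈ A, ⨅ g ∈ B, kyFan f g) (⨆ g ∈ B, ⨅ f ∈ A, kyFan f g)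

/-- The observable distance between two mm-spaces. -/
def dconc (A B : MMSpace) : ℝ :=
  sInf {r : ℝ | ∃ φ ψ, IsParameter A φ ∧ IsParameter B ψ ∧
    r = hausdorffKF (pullLip A φ) (pullLip B ψ)}

end

noncomputable section

/-- The smooth approximation `F_a(x) = a⁻¹ log(e^{ax} + e^{-ax})` of `|x|`. -/
def Fa (a x : ℝ) : ℝ := a⁻¹ * Real.log (Real.exp (a * x) + Real.exp (-(a * x)))

/-- A (minimizing, constant-speed) geodesic parametrized by `[0,1]`. -/
def IsGeodOn01 {X : Type*} [PseudoMetricSpace X] (γ : ℝ → X) : Prop :=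
  ∀ s ∈ Set.Icc (0:ℝ) 1, ∀ s' ∈ Set.Icc (0:ℝ) 1,
    dist (γ s) (γ s') = |s - s'| * dist (γ 0) (γ 1)

end

open MeasureTheory Set in
private theorem aux_step {X : Type*} [MeasurableSpace X]
    (N' ε E : ℝ) (hN' : N' < 0) (hε : 0 < ε) (hE : 0 < E) :
    ∃ δ : ℝ, 0 < δ ∧ ∀ μ ν : Measure X, IsProbabilityMeasure μ → IsProbabilityMeasure ν →
      renyiEntropy N' μ ν ≤ ENNReal.ofReal E →
      ∀ Xt : Set X, MeasurableSet Xt → μ Xtᶜ < ENNReal.ofReal δ → ν Xtᶜ < ENNReal.ofReal ε := by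
  set p : ℝ := 1 - 1 / N' with hp_def
  have hp : 1 < p := by
    have h1 : 1 / N' < 0 := div_neg_of_pos_of_neg one_pos hN'
    simp only [hp_def]; linarith
  set q : ℝ := Real.conjExponent p with hq_def
  have hpq : p.HolderConjugate q := Real.HolderConjugate.conjExponent hp
  have hq0 : 0 < q := hpq.symm.pos
  have ha : 0 < E ^ (1 / p) := Real.rpow_pos_of_pos hE _
  refine ⟨(ε / (E ^ (1 / p) + 1)) ^ q, Real.rpow_pos_of_pos (by positivity) _, ?_⟩
  set δ : ℝ := (ε / (E ^ (1 / p) + 1)) ^ q with hδ_def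
  have hδpos : 0 < δ := Real.rpow_pos_of_pos (by positivity) _
  intro μ ν hμ hν hent Xt hXt hμc
  have habs : ν ≪ μ := by
    by_contra h
    rw [renyiEntropy, if_neg h] at hent
    exact absurd (lt_of_le_of_lt hent ENNReal.ofReal_lt_top) (lt_irrefl _)
  rw [renyiEntropy, if_pos habs] at hent
  have hH := ENNReal.lintegral_mul_le_Lp_mul_Lq (μ.restrict Xtᶜ) hpq
    (Measure.measurable_rnDeriv ν μ).aemeasurable (aemeasurable_const (b := (1 : ℝ≥0∞)))
  simp only [Pi.mul_apply, mul_one, ENNReal.one_rpow, lintegral_one,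
    Measure.restrict_apply_univ] at hH
  calc ν Xtᶜ = ∫⁻ x in Xtᶜ, ν.rnDeriv μ x ∂μ := (Measure.setLIntegral_rnDeriv habs Xtᶜ).symm
    _ ≤ (∫⁻ x in Xtᶜ, ν.rnDeriv μ x ^ p ∂μ) ^ (1 / p) * μ Xtᶜ ^ (1 / q) := hH
    _ ≤ ENNReal.ofReal E ^ (1 / p) * ENNReal.ofReal δ ^ (1 / q) := by
        gcongr
        · exact le_trans (lintegral_mono' Measure.restrict_le_self le_rfl) hent
    _ = ENNReal.ofReal (E ^ (1 / p) * δ ^ (1 / q)) := by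
        rw [ENNReal.ofReal_rpow_of_pos hE, ENNReal.ofReal_rpow_of_pos hδpos,
          ← ENNReal.ofReal_mul (by positivity)]
    _ < ENNReal.ofReal ε := by
        rw [ENNReal.ofReal_lt_ofReal_iff hε]
        have hδq : δ ^ (1 / q) = ε / (E ^ (1 / p) + 1) := by
          rw [hδ_def, ← Real.rpow_mul (by positivity), mul_one_div, div_self hq0.ne',
            Real.rpow_one]
        rw [hδq, ← mul_div_assoc, div_lt_iff₀ (by positivity)]
        nlinarith [mul_pos hε ha]

open MeasureTheory Set in
/-- Uniform absolute continuity from entropy bounds: small `μ`-measure of a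
complement forces small `ν`-measure when `S_{N',μ}(ν) ≤ E`; in particular tightness of `μₙ`
together with a uniform entropy bound implies tightness of `νₙ`. -/
theorem renyiEntropy_uniform_absolute_continuity {X : Type*} [MetricSpace X] [CompleteSpace X]
    [TopologicalSpace.SeparableSpace X] [MeasurableSpace X] [BorelSpace X]
    (N' ε E : ℝ) (hN' : N' < 0) (hε : 0 < ε) (hE : 0 < E) :
    (∃ δ : ℝ, 0 < δ ∧ ∀ μ ν : Measure X, IsProbabilityMeasure μ → IsProbabilityMeasure ν →
      renyiEntropy N' μ ν ≤ ENNReal.ofReal E →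
      ∀ Xt : Set X, MeasurableSet Xt → μ Xtᶜ < ENNReal.ofReal δ → ν Xtᶜ < ENNReal.ofReal ε) ∧
    (∀ μs νs : ℕ → Measure X,
      (∀ n, IsProbabilityMeasure (μs n)) → (∀ n, IsProbabilityMeasure (νs n)) →
      IsTightSeq μs → (⨆ n, renyiEntropy N' (μs n) (νs n)) < ∞ → IsTightSeq νs) := by
  refine ⟨aux_step N' ε E hN' hε hE, ?_⟩
  intro μs νs hμs hνs htight hsup ε' hε'
  set B := ⨆ n, renyiEntropy N' (μs n) (νs n) with hB_def
  have hE' : (0:ℝ) < B.toReal + 1 := by positivity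
  obtain ⟨δ, hδ, hmain⟩ := aux_step (X := X) N' ε' (B.toReal + 1) hN' hε' hE'
  obtain ⟨K, hK, hKμ⟩ := htight δ hδ
  refine ⟨K, hK, fun n => ?_⟩
  have hb : renyiEntropy N' (μs n) (νs n) ≤ ENNReal.ofReal (B.toReal + 1) := by
    refine (le_iSup (fun n => renyiEntropy N' (μs n) (νs n)) n).trans ?_
    calc B = ENNReal.ofReal B.toReal := (ENNReal.ofReal_toReal hsup.ne).symm
      _ ≤ _ := ENNReal.ofReal_le_ofReal (by linarith)
  exact hmain (μs n) (νs n) (hμs n) (hνs n) hb K hK.isClosed.measurableSet (hKμ n)
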